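/- Let (X,d) be a metric space, V ⊆ X a nonempty finite set, and 1 ≤ k ≤ |V|. Define OPT = min over subsets U ⊆ V with |U| = k of max_{v ∈ V} min_{u ∈ U} d(v,u). Let α ≥ 1 and β ≥ 1. Suppose s_1, …, s_k ∈ V are distinct points, write S_t = {s_1, …, s_t}, and suppose for each t ∈ {1, …, k} there is an assignment π_t : V → S_t with d(v, π_t(v)) ≤ β · min_{s ∈ S_t} d(v,s) for every v ∈ V, and for each t ∈ {1, …, k−1} the new center satisfies d(s_{t+1}, π_t(s_{t+1})) ≥ (1/α) · max_{v ∈ V} min_{s ∈ S_t} d(v,s). Then max_{v ∈ V} d(v, π_k(v)) ≤ 2·α·β² · OPT. -/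

import Mathlib

/-- **Greedy k-center with approximate subroutines (Lemma 6 / Theorem 5 framework).**
`OPT` is the optimal k-center objective over center sets `U ⊆ V` with `|U| = k`.
Centers `s 0, …, s (k-1)` are distinct points of `V`; for each `t ∈ {1, …, k}`,
`π t` assigns every point of `V` to one of the first `t` centers with distance at most
`β` times the distance to the nearest of those centers, and for each `t ∈ {1, …, k-1}`
the next center `s t` has assigned distance at least `1/α` times the maximum over `V`
of the distance to the nearest of the first `t` centers. Then the final assignment is
a `2·α·β²`-approximation of `OPT`. -/
theorem stmt_4 {X : Type*} [MetricSpace X] (V : Finset X) (hV : V.Nonempty)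
    (k : ℕ) (hk1 : 1 ≤ k) (hk2 : k ≤ V.card)
    (OPT : ℝ)
    (hOPT : OPT = sInf {r : ℝ | ∃ U : Finset X, U ⊆ V ∧ U.card = k ∧
      r = V.sup' hV (fun v => sInf ((fun u => dist v u) '' (U : Set X)))})
    (α β : ℝ) (hα : 1 ≤ α) (hβ : 1 ≤ β)
    (s : ℕ → X) (hsV : ∀ t < k, s t ∈ V)
    (hs_distinct : ∀ i < k, ∀ j < k, i ≠ j → s i ≠ s j)
    (π : ℕ → X → X)
    (hπ_mem : ∀ t, 1 ≤ t → t ≤ k → ∀ v ∈ V, ∃ i < t, π t v = s i)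
    (hassign : ∀ t, 1 ≤ t → t ≤ k → ∀ v ∈ V,
      dist v (π t v) ≤ β * sInf ((fun i => dist v (s i)) '' {i : ℕ | i < t}))
    (hfarthest : ∀ t, 1 ≤ t → t < k →
      dist (s t) (π t (s t)) ≥
        (1 / α) * V.sup' hV (fun v => sInf ((fun i => dist v (s i)) '' {i : ℕ | i < t}))) :
    V.sup' hV (fun v => dist v (π k v)) ≤ 2 * α * β ^ 2 * OPT := by
  classical
  have hα0 : (0:ℝ) < α := lt_of_lt_of_le one_pos hα
  have hβ0 : (0:ℝ) < β := lt_of_lt_of_le one_pos hβ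
  -- basic facts about the images used in sInf
  have hbdd : ∀ (v : X) (t : ℕ), BddBelow ((fun i => dist v (s i)) '' {i : ℕ | i < t}) := by
    intro v t
    refine ⟨0, ?_⟩
    rintro x ⟨i, _, rfl⟩
    exact dist_nonneg
  have hne : ∀ (v : X) (t : ℕ), 1 ≤ t →
      ((fun i => dist v (s i)) '' {i : ℕ | i < t}).Nonempty := by
    intro v t ht
    exact ⟨dist v (s 0), 0, ht, rfl⟩
  have hsInf_le : ∀ (v : X) (t i : ℕ), i < t →
      sInf ((fun i => dist v (s i)) '' {i : ℕ | i < t}) ≤ dist v (s i) :=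
    fun v t i hi => csInf_le (hbdd v t) ⟨i, hi, rfl⟩
  -- OPT is attained by some U
  have hSsub : {r : ℝ | ∃ U : Finset X, U ⊆ V ∧ U.card = k ∧
        r = V.sup' hV (fun v => sInf ((fun u => dist v u) '' (U : Set X)))} ⊆
      (fun U : Finset X => V.sup' hV (fun v => sInf ((fun u => dist v u) '' (U : Set X)))) ''
        ↑V.powerset := by
    rintro r ⟨U, hU, _, rfl⟩
    exact ⟨U, by simpa using hU, rfl⟩
  obtain ⟨U0, hU0, hU0card⟩ := Finset.exists_subset_card_eq hk2
  have hSne : {r : ℝ | ∃ U : Finset X, U ⊆ V ∧ U.card = k ∧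
      r = V.sup' hV (fun v => sInf ((fun u => dist v u) '' (U : Set X)))}.Nonempty :=
    ⟨_, U0, hU0, hU0card, rfl⟩
  have hSfin : {r : ℝ | ∃ U : Finset X, U ⊆ V ∧ U.card = k ∧
      r = V.sup' hV (fun v => sInf ((fun u => dist v u) '' (U : Set X)))}.Finite :=
    Set.Finite.subset ((V.powerset.finite_toSet).image _) hSsub
  have hmem := hSne.csInf_mem hSfin
  rw [← hOPT] at hmem
  obtain ⟨U, hUV, hUcard, hOPTeq⟩ := hmem
  have hUne : U.Nonempty := Finset.card_pos.mp (by omega)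
  -- for each point of V there is a center of U within OPT
  have hnear : ∀ x ∈ V, ∃ u ∈ U, dist x u ≤ OPT := by
    intro x hx
    have hfinU : ((fun u => dist x u) '' (U : Set X)).Finite :=
      (U.finite_toSet).image _
    have hneU : ((fun u => dist x u) '' (U : Set X)).Nonempty :=
      (hUne.to_set).image _
    have hmemU := hneU.csInf_mem hfinU
    obtain ⟨u, hu, hud⟩ := hmemU
    refine ⟨u, hu, ?_⟩
    have h5 : sInf ((fun u => dist x u) '' (U : Set X)) ≤ OPT := by
      rw [hOPTeq]
      exact Finset.le_sup' (fun v => sInf ((fun u => dist v u) '' (U : Set X))) hx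
    exact hud.trans_le h5
  have hOPT0 : 0 ≤ OPT := by
    obtain ⟨v0, hv0⟩ := hV
    obtain ⟨u, hu, hud⟩ := hnear v0 hv0
    exact le_trans dist_nonneg hud
  -- the greedy radius r and the farthest point v*
  set r : ℝ := V.sup' hV (fun v => sInf ((fun i => dist v (s i)) '' {i : ℕ | i < k})) with hr
  obtain ⟨vstar, hvstarV, hvstar⟩ :=
    Finset.exists_mem_eq_sup' hV (fun v => sInf ((fun i => dist v (s i)) '' {i : ℕ | i < k}))
  -- the k+1 points
  set g : ℕ → X := fun i => if i = k then vstar else s i with hg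
  have hgV : ∀ i ≤ k, g i ∈ V := by
    intro i hi
    by_cases h : i = k
    · simp [hg, h, hvstarV]
    · simp only [hg, if_neg h]
      exact hsV i (lt_of_le_of_ne hi h)
  -- pairwise lower bound
  have hpair : ∀ i j : ℕ, i < j → j ≤ k → r ≤ α * (β * dist (g j) (g i)) := by
    intro i j hij hjk
    have hik : i < k := lt_of_lt_of_le hij hjk
    have hgi : g i = s i := by simp [hg, Nat.ne_of_lt hik]
    by_cases hjeq : j = k
    · -- j = k : g j = v*, and r = sInf_{i<k} dist v* (s i) ≤ dist v* (s i)
      have hgj : g j = vstar := by simp [hg, hjeq]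
      have h1 : r ≤ dist vstar (s i) := by
        rw [hr, hvstar]
        exact hsInf_le vstar k i hik
      have hd : (0:ℝ) ≤ dist vstar (s i) := dist_nonneg
      have h2 : dist vstar (s i) ≤ β * dist vstar (s i) := le_mul_of_one_le_left hd hβ
      have h3 : β * dist vstar (s i) ≤ α * (β * dist vstar (s i)) :=
        le_mul_of_one_le_left (by positivity) hα
      rw [hgj, hgi]
      linarith
    · -- j < k
      have hjk' : j < k := lt_of_le_of_ne hjk hjeq
      have hgj : g j = s j := by simp [hg, hjeq]
      have hj1 : 1 ≤ j := by omega
      have h1 := hfarthest j hj1 hjk'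
      have h2 := hassign j hj1 hjk'.le (s j) (hsV j hjk')
      have h3 : sInf ((fun i' => dist (s j) (s i')) '' {i' : ℕ | i' < j}) ≤ dist (s j) (s i) :=
        hsInf_le (s j) j i hij
      -- r ≤ sup' over f_j
      have h4 : r ≤ V.sup' hV (fun v => sInf ((fun i => dist v (s i)) '' {i : ℕ | i < j})) := by
        rw [hr]
        apply Finset.sup'_le
        intro v hv
        have hsub : ((fun i => dist v (s i)) '' {i : ℕ | i < j}) ⊆
            ((fun i => dist v (s i)) '' {i : ℕ | i < k}) :=
          Set.image_mono (fun i hi => lt_of_lt_of_le hi hjk'.le)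
        have := csInf_le_csInf (hbdd v k) (hne v j hj1) hsub
        exact le_trans this
          (Finset.le_sup' (fun v => sInf ((fun i => dist v (s i)) '' {i : ℕ | i < j})) hv)
      have hXY : (1 / α) * r ≤ β * dist (s j) (s i) := by
        have h1' : (1 / α) * r ≤ dist (s j) (π j (s j)) := by
          have := mul_le_mul_of_nonneg_left h4 (le_of_lt (by positivity : (0:ℝ) < 1/α))
          linarith [h1]
        have h2' : dist (s j) (π j (s j)) ≤ β * dist (s j) (s i) :=
          le_trans h2 (mul_le_mul_of_nonneg_left h3 hβ0.le)
        linarith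
      have := mul_le_mul_of_nonneg_left hXY hα0.le
      rw [← mul_assoc, mul_one_div_cancel hα0.ne', one_mul] at this
      rw [hgj, hgi]
      exact this
  -- pigeonhole on the nearest-center map
  set N : ℕ → X := fun i => if h : g i ∈ V then (hnear (g i) h).choose else g i with hN
  have hNmem : ∀ i ≤ k, N i ∈ U ∧ dist (g i) (N i) ≤ OPT := by
    intro i hi
    have h := hgV i hi
    simp only [hN, dif_pos h]
    exact ⟨(hnear (g i) h).choose_spec.1, (hnear (g i) h).choose_spec.2⟩
  have hcard : U.card < (Finset.range (k+1)).card := by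
    simp [hUcard]
  obtain ⟨i, hi, j, hj, hij, hNij⟩ :=
    Finset.exists_ne_map_eq_of_card_lt_of_maps_to hcard
      (fun i (hi : i ∈ Finset.range (k+1)) =>
        (hNmem i (by simpa [Nat.lt_succ_iff] using hi)).1)
  rw [Finset.mem_range, Nat.lt_succ_iff] at hi hj
  -- wlog i < j
  have key : r ≤ α * (β * (2 * OPT)) := by
    rcases lt_or_gt_of_ne hij with h | h
    · have hd : dist (g j) (g i) ≤ 2 * OPT := by
        calc dist (g j) (g i) ≤ dist (g j) (N j) + dist (N j) (g i) := dist_triangle _ _ _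
          _ = dist (g j) (N j) + dist (g i) (N i) := by rw [dist_comm (N j) (g i), ← hNij]
          _ ≤ OPT + OPT := add_le_add (hNmem j hj).2 (hNmem i hi).2
          _ = 2 * OPT := by ring
      calc r ≤ α * (β * dist (g j) (g i)) := hpair i j h hj
        _ ≤ α * (β * (2 * OPT)) := by
            apply mul_le_mul_of_nonneg_left _ hα0.le
            exact mul_le_mul_of_nonneg_left hd hβ0.le
    · have hd : dist (g i) (g j) ≤ 2 * OPT := by
        calc dist (g i) (g j) ≤ dist (g i) (N i) + dist (N i) (g j) := dist_triangle _ _ _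
          _ = dist (g i) (N i) + dist (g j) (N j) := by rw [dist_comm (N i) (g j), hNij]
          _ ≤ OPT + OPT := add_le_add (hNmem i hi).2 (hNmem j hj).2
          _ = 2 * OPT := by ring
      calc r ≤ α * (β * dist (g i) (g j)) := hpair j i h hi
        _ ≤ α * (β * (2 * OPT)) := by
            apply mul_le_mul_of_nonneg_left _ hα0.le
            exact mul_le_mul_of_nonneg_left hd hβ0.le
  -- final bound
  have hfinal : V.sup' hV (fun v => dist v (π k v)) ≤ β * r := by
    apply Finset.sup'_le
    intro v hv
    have h1 := hassign k hk1 le_rfl v hv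
    have h2 : sInf ((fun i => dist v (s i)) '' {i : ℕ | i < k}) ≤ r :=
      Finset.le_sup' (fun v => sInf ((fun i => dist v (s i)) '' {i : ℕ | i < k})) hv
    exact le_trans h1 (mul_le_mul_of_nonneg_left h2 hβ0.le)
  have : β * r ≤ β * (α * (β * (2 * OPT))) := mul_le_mul_of_nonneg_left key hβ0.le
  have heq : β * (α * (β * (2 * OPT))) = 2 * α * β ^ 2 * OPT := by ring
  linarith
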